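/- Let l and k be positive integers with l ≤ k, and suppose the page universe Ω satisfies |Ω| ≥ k+1. Then no deterministic online algorithm for the file-bundle caching problem with cache size k achieves a competitive ratio better than k − l + 1: for every deterministic online algorithm A with cache size k, every real r < k − l + 1, and every real c, there exists a finite query sequence σ whose queries have cardinality l such that A(σ) > r · OPT_k(σ) + c. -/

import Mathlib

variable {Ω : Type*}

/-- A caching schedule with cache size `k` serving queries `Q 1, …, Q T`
(the cache contents are `C 1, …, C (T+1)`): on a hit the cache is unchanged,
on a miss the query is inserted into the next cache. -/
def IsSchedule [DecidableEq Ω] (k T : ℕ) (Q C : ℕ → Finset Ω) : Prop :=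
  (∀ t, 1 ≤ t → t ≤ T + 1 → (C t).card = k) ∧
  ∀ t, 1 ≤ t → t ≤ T →
    (Q t ⊆ C t → C (t + 1) = C t) ∧ (¬ Q t ⊆ C t → Q t ⊆ C (t + 1))

/-- The number of cache misses of the cache sequence `C` on queries `Q 1, …, Q T`. -/
def cost [DecidableEq Ω] (T : ℕ) (Q C : ℕ → Finset Ω) : ℕ :=
  ((Finset.Icc 1 T).filter fun t => ¬ Q t ⊆ C t).card

/-- The optimal offline cost with cache size `k` on queries `Q 1, …, Q T`. -/
noncomputable def OPT [DecidableEq Ω] (k T : ℕ) (Q : ℕ → Finset Ω) : ℕ :=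
  sInf {n : ℕ | ∃ C : ℕ → Finset Ω, IsSchedule k T Q C ∧ cost T Q C = n}

/-- The cache sequence induced by the deterministic online algorithm given by the
initial cache `C1` and the update map `A`: `C 1 = C1` and `C (t+1) = A [Q 1, …, Q t]`. -/
def inducedCaches (C1 : Finset Ω) (A : List (Finset Ω) → Finset Ω) (Q : ℕ → Finset Ω) :
    ℕ → Finset Ω :=
  fun t => if t ≤ 1 then C1 else A ((List.range (t - 1)).map fun s => Q (s + 1))

section Adversary

variable [DecidableEq Ω] (U S : Finset Ω) (x0 : Ω) (C1 : Finset Ω)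
  (A : List (Finset Ω) → Finset Ω)

/-- Given the current online cache `C`, a page of `U` outside `S ∪ C` if one exists. -/
noncomputable def nextX (C : Finset Ω) : Ω :=
  if h : (U \ (S ∪ C)).Nonempty then h.choose else x0

def cacheOf (L : List (Finset Ω)) : Finset Ω := if L.isEmpty then C1 else A L

noncomputable def hist : ℕ → List (Finset Ω)
  | 0 => []
  | n + 1 => hist n ++ [insert (nextX U S x0 (cacheOf C1 A (hist n))) S]

noncomputable def advX (t : ℕ) : Ω :=
  nextX U S x0 (cacheOf C1 A (hist U S x0 C1 A (t - 1)))

noncomputable def advQ (t : ℕ) : Finset Ω := insert (advX U S x0 C1 A t) S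

noncomputable def pickB (m t : ℕ) : Finset Ω :=
  (U \ advQ U S x0 C1 A t) \
    ((Finset.range (m - 1)).image fun i => advX U S x0 C1 A (t + 1 + i))

noncomputable def pickP (m t : ℕ) : Ω :=
  if h : (pickB U S x0 C1 A m t).Nonempty then h.choose else x0

noncomputable def offC (m : ℕ) : ℕ → Finset Ω
  | 0 => U \ {pickP U S x0 C1 A m 0}
  | t + 1 => if advQ U S x0 C1 A t ⊆ offC m t then offC m t
             else U \ {pickP U S x0 C1 A m t}

variable {U S x0}

lemma nextX_mem (hx0 : x0 ∈ U \ S) (C : Finset Ω) :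
    nextX U S x0 C ∈ U ∧ nextX U S x0 C ∉ S := by
  unfold nextX
  split
  · next h =>
    have := h.choose_spec
    simp only [Finset.mem_sdiff, Finset.mem_union] at this
    exact ⟨this.1, fun hs => this.2 (Or.inl hs)⟩
  · simpa [Finset.mem_sdiff] using hx0

lemma advX_mem (hx0 : x0 ∈ U \ S) (t : ℕ) :
    advX U S x0 C1 A t ∈ U ∧ advX U S x0 C1 A t ∉ S := nextX_mem hx0 _

lemma advQ_subset (hx0 : x0 ∈ U \ S) (hS : S ⊆ U) (t : ℕ) :
    advQ U S x0 C1 A t ⊆ U :=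
  Finset.insert_subset (advX_mem C1 A hx0 t).1 hS

lemma advQ_card {l : ℕ} (hx0 : x0 ∈ U \ S) (hScard : S.card = l - 1) (hl : 0 < l) (t : ℕ) :
    (advQ U S x0 C1 A t).card = l := by
  rw [advQ, Finset.card_insert_of_notMem (advX_mem C1 A hx0 t).2, hScard]
  omega

lemma hist_eq (n : ℕ) :
    hist U S x0 C1 A n = (List.range n).map fun s => advQ U S x0 C1 A (s + 1) := by
  induction n with
  | zero => simp [hist]
  | succ n ih =>
    rw [hist, List.range_succ, List.map_append, ← ih]
    simp [advQ, advX]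

lemma hist_length (n : ℕ) : (hist U S x0 C1 A n).length = n := by
  rw [hist_eq]; simp

lemma induced_eq (t : ℕ) (ht : 1 ≤ t) :
    inducedCaches C1 A (advQ U S x0 C1 A) t = cacheOf C1 A (hist U S x0 C1 A (t - 1)) := by
  rcases Nat.lt_or_ge t 2 with h | h
  · interval_cases t
    simp [inducedCaches, cacheOf, hist]
  · have h1 : ¬ t ≤ 1 := by omega
    have hlen : (hist U S x0 C1 A (t-1)).length = t - 1 := hist_length _ _ _
    rw [inducedCaches, if_neg h1, cacheOf, if_neg, hist_eq]
    · intro he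
      rw [List.isEmpty_iff] at he
      rw [he] at hlen
      simp at hlen
      omega

lemma online_miss {k : ℕ} (hU : U.card = k + 1) (hx0 : x0 ∈ U \ S) (hS : S ⊆ U)
    (C : Finset Ω) (hC : C.card = k) :
    ¬ insert (nextX U S x0 C) S ⊆ C := by
  unfold nextX
  split
  · next h =>
    have := h.choose_spec
    simp only [Finset.mem_sdiff, Finset.mem_union] at this
    intro hsub
    exact this.2 (Or.inr (hsub (Finset.mem_insert_self _ _)))
  · next h =>
    rw [Finset.not_nonempty_iff_eq_empty, Finset.sdiff_eq_empty_iff_subset] at h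
    intro hsub
    have hSC : S ⊆ C := (Finset.insert_subset_iff.mp hsub).2
    have : U ⊆ C := h.trans (by rw [Finset.union_subset_iff]; exact ⟨hSC, le_refl _⟩)
    have := Finset.card_le_card this
    omega

section Offline

variable {k l m : ℕ} (C1 : Finset Ω) (A : List (Finset Ω) → Finset Ω)
variable (hU : U.card = k + 1) (hS : S ⊆ U) (hScard : S.card = l - 1)
  (hx0 : x0 ∈ U \ S) (hl : 0 < l) (hlk : l ≤ k) (hm : m = k - l + 1)

include hU hS hScard hx0 hl hlk hm

lemma pickB_nonempty (t : ℕ) : (pickB U S x0 C1 A m t).Nonempty := by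
  have h1 : (U \ advQ U S x0 C1 A t).card = m := by
    rw [Finset.card_sdiff_of_subset (advQ_subset C1 A hx0 hS t), hU,
      advQ_card C1 A hx0 hScard hl]
    omega
  have h2 : ((Finset.range (m - 1)).image fun i => advX U S x0 C1 A (t + 1 + i)).card
      ≤ m - 1 := (Finset.card_image_le).trans (by simp)
  have h3 := Finset.le_card_sdiff
    ((Finset.range (m - 1)).image fun i => advX U S x0 C1 A (t + 1 + i))
    (U \ advQ U S x0 C1 A t)
  rw [← Finset.card_pos]
  rw [pickB]
  omega

lemma pickP_spec (t : ℕ) :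
    pickP U S x0 C1 A m t ∈ U ∧ pickP U S x0 C1 A m t ∉ advQ U S x0 C1 A t ∧
      ∀ i < m - 1, pickP U S x0 C1 A m t ≠ advX U S x0 C1 A (t + 1 + i) := by
  have hne := pickB_nonempty C1 A hU hS hScard hx0 hl hlk hm t
  have hmem : pickP U S x0 C1 A m t ∈ pickB U S x0 C1 A m t := by
    rw [pickP, dif_pos hne]; exact hne.choose_spec
  rw [pickB] at hmem
  simp only [Finset.mem_sdiff, Finset.mem_image, Finset.mem_range, not_exists, not_and] at hmem
  exact ⟨hmem.1.1, hmem.1.2, fun i hi => (hmem.2 i hi).elim ∘ Eq.symm⟩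

lemma offC_card (t : ℕ) : (offC U S x0 C1 A m t).card = k := by
  have key : ∀ s, (U \ ({pickP U S x0 C1 A m s} : Finset Ω)).card = k := by
    intro s
    rw [Finset.card_sdiff_of_subset (Finset.singleton_subset_iff.mpr
      (pickP_spec C1 A hU hS hScard hx0 hl hlk hm s).1), hU]
    simp
  induction t with
  | zero => rw [offC]; exact key 0
  | succ t ih =>
    rw [offC]
    split
    · exact ih
    · exact key t

lemma advQ_sub_pick (s i : ℕ) (hi1 : 1 ≤ i) (hi2 : i ≤ m - 1) :
    advQ U S x0 C1 A (s + i) ⊆ U \ {pickP U S x0 C1 A m s} := by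
  obtain ⟨hpU, hpQ, hpX⟩ := pickP_spec C1 A hU hS hScard hx0 hl hlk hm s
  intro a ha
  rw [Finset.mem_sdiff, Finset.mem_singleton]
  refine ⟨advQ_subset C1 A hx0 hS _ ha, ?_⟩
  rintro rfl
  rw [advQ, Finset.mem_insert] at ha
  rcases ha with ha | ha
  · have : s + i = s + 1 + (i - 1) := by omega
    rw [this] at ha
    exact hpX (i - 1) (by omega) ha
  · exact hpQ (Finset.mem_insert_of_mem ha)

lemma offC_run (s : ℕ) (hs : offC U S x0 C1 A m (s + 1) = U \ {pickP U S x0 C1 A m s}) :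
    ∀ i, 1 ≤ i → i ≤ m - 1 →
      offC U S x0 C1 A m (s + i) = U \ {pickP U S x0 C1 A m s} := by
  intro i
  induction i with
  | zero => omega
  | succ i ih =>
    intro _ hi2
    rcases Nat.eq_zero_or_pos i with rfl | hipos
    · exact hs
    · have hoff := ih hipos (by omega)
      have hsub := advQ_sub_pick C1 A hU hS hScard hx0 hl hlk hm s i hipos (by omega)
      rw [← hoff] at hsub
      have : s + (i + 1) = (s + i) + 1 := by omega
      rw [this, offC, if_pos hsub, hoff]

lemma offC_hit (s : ℕ) (hs : offC U S x0 C1 A m (s + 1) = U \ {pickP U S x0 C1 A m s})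
    (i : ℕ) (hi1 : 1 ≤ i) (hi2 : i ≤ m - 1) :
    advQ U S x0 C1 A (s + i) ⊆ offC U S x0 C1 A m (s + i) := by
  rw [offC_run C1 A hU hS hScard hx0 hl hlk hm s hs i hi1 hi2]
  exact advQ_sub_pick C1 A hU hS hScard hx0 hl hlk hm s i hi1 hi2

omit hU hS hScard hx0 hl hlk hm

lemma offC_one : offC U S x0 C1 A m 1 = U \ {pickP U S x0 C1 A m 0} := by
  show offC U S x0 C1 A m (0 + 1) = _
  rw [offC]
  split
  · rw [offC]
  · rfl

lemma offC_miss (t : ℕ) (h : ¬ advQ U S x0 C1 A t ⊆ offC U S x0 C1 A m t) :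
    offC U S x0 C1 A m (t + 1) = U \ {pickP U S x0 C1 A m t} := by
  rw [offC, if_neg h]

end Offline

end Adversary

section Count

variable {Ω : Type*} [DecidableEq Ω] {U S : Finset Ω} {x0 : Ω} {k l m : ℕ}
  (C1 : Finset Ω) (A : List (Finset Ω) → Finset Ω)
variable (hU : U.card = k + 1) (hS : S ⊆ U) (hScard : S.card = l - 1)
  (hx0 : x0 ∈ U \ S) (hl : 0 < l) (hlk : l ≤ k) (hm : m = k - l + 1)

include hU hS hScard hx0 hl hlk hm

lemma offC_isSchedule (T : ℕ) :
    IsSchedule k T (advQ U S x0 C1 A) (offC U S x0 C1 A m) := by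
  constructor
  · intro t _ _
    exact offC_card C1 A hU hS hScard hx0 hl hlk hm t
  · intro t _ _
    constructor
    · intro h
      rw [offC, if_pos h]
    · intro h
      rw [offC_miss C1 A t h]
      obtain ⟨_, hpQ, _⟩ := pickP_spec C1 A hU hS hScard hx0 hl hlk hm t
      intro a ha
      rw [Finset.mem_sdiff, Finset.mem_singleton]
      exact ⟨advQ_subset C1 A hx0 hS _ ha, fun he => hpQ (he ▸ ha)⟩

lemma miss_ge (t : ℕ) (ht : 1 ≤ t) (h : ¬ advQ U S x0 C1 A t ⊆ offC U S x0 C1 A m t) :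
    m ≤ t := by
  by_contra hc
  push_neg at hc
  exact h (by simpa using offC_hit C1 A hU hS hScard hx0 hl hlk hm 0 (offC_one C1 A) t ht (by omega))

lemma miss_sep (s t : ℕ) (hst : s < t)
    (hs : ¬ advQ U S x0 C1 A s ⊆ offC U S x0 C1 A m s)
    (ht : ¬ advQ U S x0 C1 A t ⊆ offC U S x0 C1 A m t) :
    s + m ≤ t := by
  by_contra hc
  push_neg at hc
  have hi1 : 1 ≤ t - s := by omega
  have hi2 : t - s ≤ m - 1 := by omega
  have := offC_hit C1 A hU hS hScard hx0 hl hlk hm s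
    (offC_miss C1 A s hs) (t - s) hi1 hi2
  rw [show s + (t - s) = t by omega] at this
  exact ht this

lemma miss_count (T : ℕ) :
    cost T (advQ U S x0 C1 A) (offC U S x0 C1 A m) ≤ T / m := by
  rw [cost]
  have := Finset.card_le_card_of_injOn (f := fun t => t / m)
    (s := (Finset.Icc 1 T).filter fun t => ¬ advQ U S x0 C1 A t ⊆ offC U S x0 C1 A m t)
    (t := Finset.Icc 1 (T / m)) ?_ ?_
  · simpa using this
  · intro t hti
    simp only [Finset.mem_coe, Finset.mem_filter, Finset.mem_Icc] at hti
    have hge := miss_ge C1 A hU hS hScard hx0 hl hlk hm t hti.1.1 hti.2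
    rw [Finset.mem_coe, Finset.mem_Icc]
    exact ⟨(Nat.one_le_div_iff (by omega)).mpr hge, Nat.div_le_div_right hti.1.2⟩
  · intro a ha b hb hab
    simp only [Finset.coe_filter, Set.mem_setOf_eq, Finset.mem_Icc] at ha hb
    have key : ∀ x y : ℕ, x < y →
        (¬ advQ U S x0 C1 A x ⊆ offC U S x0 C1 A m x) →
        (¬ advQ U S x0 C1 A y ⊆ offC U S x0 C1 A m y) → x / m < y / m := by
      intro x y hxy hx hy
      have hsep := miss_sep C1 A hU hS hScard hx0 hl hlk hm x y hxy hx hy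
      have h1 : (x + m) / m ≤ y / m := Nat.div_le_div_right hsep
      rw [Nat.add_div_right _ (by omega)] at h1
      omega
    rcases lt_trichotomy a b with h | h | h
    · exact absurd hab (Nat.ne_of_lt (key a b h ha.2 hb.2))
    · exact h
    · exact absurd hab.symm (Nat.ne_of_lt (key b a h hb.2 ha.2))

lemma OPT_le (T : ℕ) : OPT k T (advQ U S x0 C1 A) ≤ T / m := by
  refine le_trans (Nat.sInf_le ?_) (miss_count C1 A hU hS hScard hx0 hl hlk hm T)
  exact ⟨offC U S x0 C1 A m, offC_isSchedule C1 A hU hS hScard hx0 hl hlk hm T, rfl⟩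

end Count

/-- No deterministic online algorithm for file-bundle caching with cache size `k`
achieves a competitive ratio better than `k - l + 1`. -/
theorem stmt0 [DecidableEq Ω] [Fintype Ω] (l k : ℕ) (hl : 0 < l) (hlk : l ≤ k)
    (hΩ : k + 1 ≤ Fintype.card Ω)
    (C1 : Finset Ω) (hC1 : C1.card = k)
    (A : List (Finset Ω) → Finset Ω)
    (hA : ∀ (T : ℕ) (Q : ℕ → Finset Ω), (∀ t, 1 ≤ t → t ≤ T → (Q t).card = l) →
      IsSchedule k T Q (inducedCaches C1 A Q))
    (r c : ℝ) (hr : r < (k : ℝ) - l + 1) :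
    ∃ (T : ℕ) (Q : ℕ → Finset Ω), (∀ t, 1 ≤ t → t ≤ T → (Q t).card = l) ∧
      r * (OPT k T Q : ℝ) + c < (cost T Q (inducedCaches C1 A Q) : ℝ) := by
  classical
  set m : ℕ := k - l + 1 with hm
  have hm0 : 0 < m := by omega
  -- choose the universe, the core, and a spare page
  obtain ⟨U, -, hU⟩ := Finset.exists_subset_card_eq
    (show k + 1 ≤ (Finset.univ : Finset Ω).card by simpa using hΩ)
  obtain ⟨S, hS, hScard⟩ := Finset.exists_subset_card_eq (show l - 1 ≤ U.card by omega)
  obtain ⟨x0, hx0⟩ : (U \ S).Nonempty := by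
    rw [← Finset.card_pos, Finset.card_sdiff_of_subset hS, hU, hScard]
    omega
  set Q : ℕ → Finset Ω := advQ U S x0 C1 A with hQ
  have hQcard : ∀ t, 1 ≤ t → t ≤ 0 + t → (Q t).card = l := fun t _ _ =>
    advQ_card C1 A hx0 hScard hl t
  have hQcard' : ∀ (T : ℕ), ∀ t, 1 ≤ t → t ≤ T → (Q t).card = l := fun T t _ _ =>
    advQ_card C1 A hx0 hScard hl t
  -- real-number preliminaries
  have hmR : ((m : ℕ) : ℝ) = (k : ℝ) - l + 1 := by
    rw [hm]
    push_cast [Nat.cast_sub hlk]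
    ring
  set r' : ℝ := max r 0 with hr'
  have hr'0 : 0 ≤ r' := le_max_right _ _
  have hr'm : r' < (m : ℝ) := by
    rw [hmR]
    apply max_lt hr
    have : (l : ℝ) ≤ k := by exact_mod_cast hlk
    linarith
  have hmR0 : (0 : ℝ) < m := by exact_mod_cast hm0
  -- choose T large enough
  obtain ⟨T, hT⟩ := exists_nat_gt (max (c * m / ((m : ℝ) - r')) 0)
  have hTpos : (0 : ℝ) < T := lt_of_le_of_lt (le_max_right _ _) hT
  refine ⟨T, Q, hQcard' T, ?_⟩
  -- the online algorithm misses every step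
  have hsched := hA T Q (hQcard' T)
  have hmiss : ∀ t ∈ Finset.Icc 1 T, ¬ Q t ⊆ inducedCaches C1 A Q t := by
    intro t ht
    rw [Finset.mem_Icc] at ht
    have hcard : (inducedCaches C1 A Q t).card = k := hsched.1 t ht.1 (by omega)
    rw [hQ, induced_eq C1 A t ht.1] at hcard ⊢
    exact online_miss hU hx0 hS _ hcard
  have hcost : cost T Q (inducedCaches C1 A Q) = T := by
    rw [cost, Finset.filter_true_of_mem (by simpa using hmiss), Nat.card_Icc]
    omega
  -- the offline optimum is small
  have hOPT : OPT k T Q ≤ T / m := OPT_le C1 A hU hS hScard hx0 hl hlk rfl T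
  have hOPTR : ((OPT k T Q : ℕ) : ℝ) ≤ (T : ℝ) / m := by
    calc ((OPT k T Q : ℕ) : ℝ) ≤ ((T / m : ℕ) : ℝ) := by exact_mod_cast hOPT
      _ ≤ (T : ℝ) / m := Nat.cast_div_le
  -- final arithmetic
  rw [hcost]
  have h1 : r * (OPT k T Q : ℝ) ≤ r' * ((T : ℝ) / m) := by
    calc r * (OPT k T Q : ℝ) ≤ r' * (OPT k T Q : ℝ) := by
          apply mul_le_mul_of_nonneg_right (le_max_left _ _) (Nat.cast_nonneg _)
      _ ≤ r' * ((T : ℝ) / m) := mul_le_mul_of_nonneg_left hOPTR hr'0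
  have hpos : (0 : ℝ) < (m : ℝ) - r' := by linarith
  have h2 : c * m < (T : ℝ) * ((m : ℝ) - r') := by
    have := lt_of_le_of_lt (le_max_left _ _) hT
    rw [div_lt_iff₀ hpos] at this
    linarith
  have h3 : r' * ((T : ℝ) / m) + c < T := by
    have he : r' * ((T : ℝ) / m) = r' * T / m := by ring
    rw [he, div_add' _ _ _ (ne_of_gt hmR0), div_lt_iff₀ hmR0]
    nlinarith
  linarith
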